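/- Fix an integer n ≥ 1 and set P := (n+1)^{−1}·[f] in the quotient ring R/I, where [f] is the residue class of f. Then for all integers i, j with 0 ≤ i, j ≤ n, one has P^i · P^j = P^{(i+j) mod (n+1)}. Equivalently, in the basis P^0, P^1, …, P^n of R/I the structure constants of multiplication are A^k_{ij} = 1 if i + j ≡ k (mod n+1) and A^k_{ij} = 0 otherwise. -/

import Mathlib

open Complex

/-- The ring of Laurent polynomials `ℂ[x_1^{±1},…,x_n^{±1}]`. -/
abbrev LaurentR (n : ℕ) : Type := AddMonoidAlgebra ℂ (Fin n → ℤ)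

/-- The variable `x_i`. -/
noncomputable def LX (n : ℕ) (i : Fin n) : LaurentR n :=
  AddMonoidAlgebra.single (Pi.single i (1 : ℤ)) 1

/-- The monomial `(x_1⋯x_n)⁻¹`. -/
noncomputable def LXinv (n : ℕ) : LaurentR n :=
  AddMonoidAlgebra.single (fun _ => (-1 : ℤ)) 1

/-- The mirror superpotential `f = x_1 + ⋯ + x_n + (x_1⋯x_n)⁻¹`. -/
noncomputable def Lf (n : ℕ) : LaurentR n := (∑ i, LX n i) + LXinv n

/-- The Jacobian ideal `I = (x_1·∂f/∂x_1, …, x_n·∂f/∂x_n)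
  = (x_1 − (x_1⋯x_n)⁻¹, …, x_n − (x_1⋯x_n)⁻¹)`. -/
noncomputable def LI (n : ℕ) : Ideal (LaurentR n) :=
  Ideal.span (Set.range fun i : Fin n => LX n i - LXinv n)

/-- Product of monomials with coefficient 1 is the monomial of the sum of exponents. -/
lemma laurent_prod_single {n : ℕ} {α : Type*} (s : Finset α) (a : α → (Fin n → ℤ)) :
    (∏ k ∈ s, (AddMonoidAlgebra.single (a k) 1 : LaurentR n)) =
      AddMonoidAlgebra.single (∑ k ∈ s, a k) 1 := by
  classical
  induction s using Finset.induction with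
  | empty => simp [AddMonoidAlgebra.one_def]
  | insert _ _ h ih =>
    rw [Finset.prod_insert h, ih, AddMonoidAlgebra.single_mul_single, one_mul,
      Finset.sum_insert h]

/-- With `P = (n+1)⁻¹·[f]` in `R/I`, one has `P^i·P^j = P^{(i+j) mod (n+1)}` for
`0 ≤ i,j ≤ n`: the structure constants of multiplication in the basis `P^0,…,P^n` are
`A^k_{ij} = δ_{i+j−k mod n+1, 0}`. -/
theorem laurent_jacobian_quantum_multiplication (n : ℕ) (hn : 1 ≤ n) :
    ∀ i j : ℕ, i ≤ n → j ≤ n →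
      (((n : ℂ) + 1)⁻¹ • Ideal.Quotient.mk (LI n) (Lf n)) ^ i *
          (((n : ℂ) + 1)⁻¹ • Ideal.Quotient.mk (LI n) (Lf n)) ^ j =
        (((n : ℂ) + 1)⁻¹ • Ideal.Quotient.mk (LI n) (Lf n)) ^ ((i + j) % (n + 1)) := by
  intro i j hi hj
  set Q := Ideal.Quotient.mk (LI n) with hQ
  have hx : ∀ k : Fin n, Q (LX n k) = Q (LXinv n) := fun k => by
    rw [hQ, Ideal.Quotient.eq]
    exact Ideal.subset_span ⟨k, rfl⟩
  have hprod : (∏ k : Fin n, LX n k) * LXinv n = 1 := by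
    have h1 : (∏ k : Fin n, LX n k) =
        AddMonoidAlgebra.single (fun _ => (1 : ℤ)) 1 := by
      rw [show (∏ k : Fin n, LX n k) =
          ∏ k : Fin n, (AddMonoidAlgebra.single (Pi.single k (1 : ℤ)) 1 : LaurentR n) from rfl,
        laurent_prod_single]
      congr 1
      exact Finset.univ_sum_single (fun _ => (1 : ℤ))
    rw [h1, LXinv, AddMonoidAlgebra.single_mul_single, one_mul]
    have : (fun _ => (1 : ℤ)) + (fun _ => (-1 : ℤ)) = (0 : Fin n → ℤ) := by
      funext k; simp
    rw [this, AddMonoidAlgebra.one_def]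
  have ht : Q (LXinv n) ^ (n + 1) = 1 := by
    have hpow : Q (LXinv n) ^ n = Q (∏ k : Fin n, LX n k) := by
      rw [map_prod]
      simp [hx, Finset.prod_const, Finset.card_univ]
    rw [pow_succ, hpow, ← map_mul, hprod, map_one]
  have hne : ((n : ℂ) + 1) ≠ 0 := by
    have := Nat.cast_add_one_ne_zero (R := ℂ) n
    exact_mod_cast this
  have hP : (((n : ℂ) + 1)⁻¹ • Q (Lf n)) = Q (LXinv n) := by
    have hf : Q (Lf n) = ((n : ℂ) + 1) • Q (LXinv n) := by
      rw [Lf, map_add, map_sum]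
      simp only [hx]
      rw [Finset.sum_const, Finset.card_univ, Fintype.card_fin]
      rw [← Nat.cast_smul_eq_nsmul ℂ]
      rw [add_smul, one_smul]
    rw [hf, smul_smul, inv_mul_cancel₀ hne, one_smul]
  rw [hP, ← pow_add, pow_eq_pow_mod (i + j) ht]
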